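/- arXiv:1905.00851 — 2 statements merged into one kernel-verified Lean document; each statement's English description precedes it below -/
import Mathlib

section
/- For v ∈ Λ_2(ℝ^4) with v = a·e_1∧e_2 + b·e_3∧e_4 where a, b ≥ 0, the mass norm satisfies ‖v‖_mass = a + b, which strictly exceeds the Euclidean norm √(a²+b²) when both a, b > 0. -/
open scoped RealInnerProductSpace

/-- Concrete model of `Λ_k(ℝ^d)`: coordinates indexed by increasing multi-indices
(identified with `k`-element subsets of `{1,…,d}`), equipped with the Euclidean
norm making the standard wedge basis orthonormal. -/
abbrev Lam (d k : ℕ) : Type := EuclideanSpace ℝ {s : Finset (Fin d) // s.card = k}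

/-- The wedge product `v_1 ∧ ⋯ ∧ v_k` in coordinates: its coefficient on the
increasing multi-index `s` is the corresponding `k × k` minor. -/
noncomputable def wedge {d k : ℕ} (v : Fin k → EuclideanSpace ℝ (Fin d)) : Lam d k :=
  WithLp.toLp 2 (fun s : {s : Finset (Fin d) // s.card = k} =>
    Matrix.det (Matrix.of fun i j => v j ((s.1.orderIsoOfFin s.2 i : Fin d))))

/-- A `k`-vector is simple if it is a wedge product of `k` vectors. -/
def IsSimple {d k : ℕ} (x : Lam d k) : Prop := ∃ v, x = wedge v

/-- The mass norm `‖x‖_mass = inf { Σ_i |ξ_i| : each ξ_i simple, x = Σ_i ξ_i }`,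
where `|·|` is the Euclidean norm. -/
noncomputable def massNorm {d k : ℕ} (x : Lam d k) : ℝ :=
  sInf { r : ℝ | ∃ (m : ℕ) (ξ : Fin m → Lam d k),
    (∀ i, IsSimple (ξ i)) ∧ x = ∑ i, ξ i ∧ r = ∑ i, ‖ξ i‖ }


-- auxiliary lemmas

lemma emb_pair (i j : Fin 4) (hij : i < j) (h : ({i,j} : Finset (Fin 4)).card = 2) (m : Fin 2) :
    (({i,j} : Finset (Fin 4)).orderIsoOfFin h m : Fin 4) = ![i,j] m := by
  rw [Finset.coe_orderIsoOfFin_apply,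
    Finset.orderEmbOfFin_unique h (f := ![i,j]) ?_ ?_]
  · intro x; fin_cases x <;> simp
  · intro x y hxy
    fin_cases x <;> fin_cases y <;>
      simp only [Matrix.cons_val_zero, Matrix.cons_val_one, Matrix.head_cons] at * <;>
      first | exact hij | exact absurd hxy (by simp [Fin.lt_def])

lemma wedge_pair (v : Fin 2 → EuclideanSpace ℝ (Fin 4)) (i j : Fin 4) (hij : i < j)
    (h : ({i,j} : Finset (Fin 4)).card = 2) :
    wedge v ⟨{i,j}, h⟩ = v 0 i * v 1 j - v 1 i * v 0 j := by
  simp only [wedge, PiLp.toLp_apply, Matrix.det_fin_two, Matrix.of_apply]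
  rw [emb_pair i j hij h 0, emb_pair i j hij h 1]
  simp

abbrev I4 : Type := {s : Finset (Fin 4) // s.card = 2}

def p01 : I4 := ⟨{0,1}, by decide⟩
def p02 : I4 := ⟨{0,2}, by decide⟩
def p03 : I4 := ⟨{0,3}, by decide⟩
def p12 : I4 := ⟨{1,2}, by decide⟩
def p13 : I4 := ⟨{1,3}, by decide⟩
def p23 : I4 := ⟨{2,3}, by decide⟩

lemma univ_I4 : (Finset.univ : Finset I4) = {p01, p02, p03, p12, p13, p23} := by decide

lemma sum_I4 (f : I4 → ℝ) :
    ∑ s, f s = f p01 + f p02 + f p03 + f p12 + f p13 + f p23 := by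
  rw [univ_I4]
  rw [show ({p01, p02, p03, p12, p13, p23} : Finset I4)
      = insert p01 (insert p02 (insert p03 (insert p12 (insert p13 {p23})))) from rfl]
  rw [Finset.sum_insert (by decide), Finset.sum_insert (by decide),
    Finset.sum_insert (by decide), Finset.sum_insert (by decide),
    Finset.sum_insert (by decide), Finset.sum_singleton]
  ring

lemma norm_lam (x : Lam 4 2) :
    ‖x‖ = Real.sqrt (x p01^2 + x p02^2 + x p03^2 + x p12^2 + x p13^2 + x p23^2) := by
  rw [EuclideanSpace.norm_eq]
  congr 1
  have : ∀ s : I4, ‖x s‖ ^ 2 = x s ^ 2 := fun s => by rw [Real.norm_eq_abs, sq_abs]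
  simp_rw [this]
  exact sum_I4 _

lemma key_ineq (v : Fin 2 → EuclideanSpace ℝ (Fin 4)) :
    |wedge v p01 + wedge v p23| ≤ ‖wedge v‖ := by
  rw [norm_lam]
  have h01 := wedge_pair v 0 1 (by decide) p01.2
  have h02 := wedge_pair v 0 2 (by decide) p02.2
  have h03 := wedge_pair v 0 3 (by decide) p03.2
  have h12 := wedge_pair v 1 2 (by decide) p12.2
  have h13 := wedge_pair v 1 3 (by decide) p13.2
  have h23 := wedge_pair v 2 3 (by decide) p23.2
  rw [show (⟨{0,1}, p01.2⟩ : I4) = p01 from rfl] at h01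
  rw [show (⟨{0,2}, p02.2⟩ : I4) = p02 from rfl] at h02
  rw [show (⟨{0,3}, p03.2⟩ : I4) = p03 from rfl] at h03
  rw [show (⟨{1,2}, p12.2⟩ : I4) = p12 from rfl] at h12
  rw [show (⟨{1,3}, p13.2⟩ : I4) = p13 from rfl] at h13
  rw [show (⟨{2,3}, p23.2⟩ : I4) = p23 from rfl] at h23
  rw [← Real.sqrt_sq_eq_abs]
  apply Real.sqrt_le_sqrt
  rw [h01, h02, h03, h12, h13, h23]
  nlinarith [sq_nonneg (v 0 0 * v 1 2 - v 1 0 * v 0 2 - (v 0 1 * v 1 3 - v 1 1 * v 0 3)),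
    sq_nonneg (v 0 0 * v 1 3 - v 1 0 * v 0 3 + (v 0 1 * v 1 2 - v 1 1 * v 0 2))]
lemma smul_wedge (c : ℝ) (u w : EuclideanSpace ℝ (Fin 4)) :
    c • wedge ![u, w] = wedge ![c • u, w] := by
  ext s
  simp only [wedge, PiLp.toLp_apply, PiLp.smul_apply, smul_eq_mul, Matrix.det_fin_two, Matrix.of_apply,
    Matrix.cons_val_zero, Matrix.cons_val_one, Matrix.head_cons]
  ring

lemma w1_coords :
    (wedge ![EuclideanSpace.single 0 (1:ℝ), EuclideanSpace.single 1 (1:ℝ)] : Lam 4 2) p01 = 1 ∧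
    (wedge ![EuclideanSpace.single 0 (1:ℝ), EuclideanSpace.single 1 (1:ℝ)] : Lam 4 2) p02 = 0 ∧
    (wedge ![EuclideanSpace.single 0 (1:ℝ), EuclideanSpace.single 1 (1:ℝ)] : Lam 4 2) p03 = 0 ∧
    (wedge ![EuclideanSpace.single 0 (1:ℝ), EuclideanSpace.single 1 (1:ℝ)] : Lam 4 2) p12 = 0 ∧
    (wedge ![EuclideanSpace.single 0 (1:ℝ), EuclideanSpace.single 1 (1:ℝ)] : Lam 4 2) p13 = 0 ∧
    (wedge ![EuclideanSpace.single 0 (1:ℝ), EuclideanSpace.single 1 (1:ℝ)] : Lam 4 2) p23 = 0 := by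
  refine ⟨?_, ?_, ?_, ?_, ?_, ?_⟩ <;>
  · first
      | rw [show p01 = ⟨{0,1}, by decide⟩ from rfl, wedge_pair _ 0 1 (by decide)]
      | rw [show p02 = ⟨{0,2}, by decide⟩ from rfl, wedge_pair _ 0 2 (by decide)]
      | rw [show p03 = ⟨{0,3}, by decide⟩ from rfl, wedge_pair _ 0 3 (by decide)]
      | rw [show p12 = ⟨{1,2}, by decide⟩ from rfl, wedge_pair _ 1 2 (by decide)]
      | rw [show p13 = ⟨{1,3}, by decide⟩ from rfl, wedge_pair _ 1 3 (by decide)]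
      | rw [show p23 = ⟨{2,3}, by decide⟩ from rfl, wedge_pair _ 2 3 (by decide)]
    simp [EuclideanSpace.single_apply]

lemma w2_coords :
    (wedge ![EuclideanSpace.single 2 (1:ℝ), EuclideanSpace.single 3 (1:ℝ)] : Lam 4 2) p01 = 0 ∧
    (wedge ![EuclideanSpace.single 2 (1:ℝ), EuclideanSpace.single 3 (1:ℝ)] : Lam 4 2) p02 = 0 ∧
    (wedge ![EuclideanSpace.single 2 (1:ℝ), EuclideanSpace.single 3 (1:ℝ)] : Lam 4 2) p03 = 0 ∧
    (wedge ![EuclideanSpace.single 2 (1:ℝ), EuclideanSpace.single 3 (1:ℝ)] : Lam 4 2) p12 = 0 ∧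
    (wedge ![EuclideanSpace.single 2 (1:ℝ), EuclideanSpace.single 3 (1:ℝ)] : Lam 4 2) p13 = 0 ∧
    (wedge ![EuclideanSpace.single 2 (1:ℝ), EuclideanSpace.single 3 (1:ℝ)] : Lam 4 2) p23 = 1 := by
  refine ⟨?_, ?_, ?_, ?_, ?_, ?_⟩ <;>
  · first
      | rw [show p01 = ⟨{0,1}, by decide⟩ from rfl, wedge_pair _ 0 1 (by decide)]
      | rw [show p02 = ⟨{0,2}, by decide⟩ from rfl, wedge_pair _ 0 2 (by decide)]
      | rw [show p03 = ⟨{0,3}, by decide⟩ from rfl, wedge_pair _ 0 3 (by decide)]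
      | rw [show p12 = ⟨{1,2}, by decide⟩ from rfl, wedge_pair _ 1 2 (by decide)]
      | rw [show p13 = ⟨{1,3}, by decide⟩ from rfl, wedge_pair _ 1 3 (by decide)]
      | rw [show p23 = ⟨{2,3}, by decide⟩ from rfl, wedge_pair _ 2 3 (by decide)]
    simp [EuclideanSpace.single_apply]

lemma norm_w1 :
    ‖(wedge ![EuclideanSpace.single 0 (1:ℝ), EuclideanSpace.single 1 (1:ℝ)] : Lam 4 2)‖ = 1 := by
  obtain ⟨h1, h2, h3, h4, h5, h6⟩ := w1_coords
  rw [norm_lam, h1, h2, h3, h4, h5, h6]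
  norm_num

lemma norm_w2 :
    ‖(wedge ![EuclideanSpace.single 2 (1:ℝ), EuclideanSpace.single 3 (1:ℝ)] : Lam 4 2)‖ = 1 := by
  obtain ⟨h1, h2, h3, h4, h5, h6⟩ := w2_coords
  rw [norm_lam, h1, h2, h3, h4, h5, h6]
  norm_num

/-- For `v = a·e₁∧e₂ + b·e₃∧e₄ ∈ Λ_2(ℝ^4)` with `a, b ≥ 0`, the mass
norm satisfies `‖v‖_mass = a + b`, which strictly exceeds the Euclidean norm
`√(a² + b²)` when both `a, b > 0`. -/
theorem massNorm_e12_add_e34 (a b : ℝ) (ha : 0 ≤ a) (hb : 0 ≤ b) :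
    massNorm (a • wedge ![EuclideanSpace.single 0 (1:ℝ), EuclideanSpace.single 1 (1:ℝ)]
        + b • wedge ![EuclideanSpace.single 2 (1:ℝ), EuclideanSpace.single 3 (1:ℝ)]
        : Lam 4 2) = a + b ∧
      (0 < a → 0 < b → Real.sqrt (a ^ 2 + b ^ 2) < a + b) := by
  constructor
  · have hmem : (a + b) ∈ { r : ℝ | ∃ (m : ℕ) (ξ : Fin m → Lam 4 2),
        (∀ i, IsSimple (ξ i)) ∧
        (a • wedge ![EuclideanSpace.single 0 (1:ℝ), EuclideanSpace.single 1 (1:ℝ)]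
          + b • wedge ![EuclideanSpace.single 2 (1:ℝ), EuclideanSpace.single 3 (1:ℝ)]
          : Lam 4 2) = ∑ i, ξ i ∧ r = ∑ i, ‖ξ i‖ } := by
      refine ⟨2, ![a • wedge ![EuclideanSpace.single 0 (1:ℝ), EuclideanSpace.single 1 (1:ℝ)],
        b • wedge ![EuclideanSpace.single 2 (1:ℝ), EuclideanSpace.single 3 (1:ℝ)]], ?_, ?_, ?_⟩
      · intro i
        fin_cases i
        · exact ⟨_, smul_wedge a _ _⟩
        · exact ⟨_, smul_wedge b _ _⟩
      · rw [Fin.sum_univ_two]; rfl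
      · rw [Fin.sum_univ_two]
        simp only [Matrix.cons_val_zero, Matrix.cons_val_one, Matrix.head_cons]
        rw [norm_smul, norm_smul, norm_w1, norm_w2,
          Real.norm_eq_abs, Real.norm_eq_abs, abs_of_nonneg ha, abs_of_nonneg hb]
        ring
    have hlb : ∀ r ∈ { r : ℝ | ∃ (m : ℕ) (ξ : Fin m → Lam 4 2),
        (∀ i, IsSimple (ξ i)) ∧
        (a • wedge ![EuclideanSpace.single 0 (1:ℝ), EuclideanSpace.single 1 (1:ℝ)]
          + b • wedge ![EuclideanSpace.single 2 (1:ℝ), EuclideanSpace.single 3 (1:ℝ)]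
          : Lam 4 2) = ∑ i, ξ i ∧ r = ∑ i, ‖ξ i‖ }, a + b ≤ r := by
      rintro r ⟨m, ξ, hsimple, hsum, hr⟩
      have hu01 : (a • wedge ![EuclideanSpace.single 0 (1:ℝ), EuclideanSpace.single 1 (1:ℝ)]
          + b • wedge ![EuclideanSpace.single 2 (1:ℝ), EuclideanSpace.single 3 (1:ℝ)]
          : Lam 4 2) p01 = a := by
        rw [PiLp.add_apply, PiLp.smul_apply, PiLp.smul_apply, w1_coords.1, w2_coords.1]
        simp
      have hu23 : (a • wedge ![EuclideanSpace.single 0 (1:ℝ), EuclideanSpace.single 1 (1:ℝ)]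
          + b • wedge ![EuclideanSpace.single 2 (1:ℝ), EuclideanSpace.single 3 (1:ℝ)]
          : Lam 4 2) p23 = b := by
        rw [PiLp.add_apply, PiLp.smul_apply, PiLp.smul_apply,
          w1_coords.2.2.2.2.2, w2_coords.2.2.2.2.2]
        simp
      rw [hsum] at hu01 hu23
      rw [WithLp.ofLp_sum, Finset.sum_apply _ _ _] at hu01 hu23
      calc a + b = ∑ i, (ξ i p01 + ξ i p23) := by
            rw [Finset.sum_add_distrib, hu01, hu23]
        _ ≤ ∑ i, ‖ξ i‖ := by
            apply Finset.sum_le_sum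
            intro i _
            obtain ⟨v, hv⟩ := hsimple i
            rw [hv]
            exact le_trans (le_abs_self _) (key_ineq v)
        _ = r := hr.symm
    rw [massNorm]
    exact le_antisymm (csInf_le ⟨a + b, hlb⟩ hmem) (le_csInf ⟨a + b, hmem⟩ hlb)
  · intro ha' hb'
    have h : a + b = Real.sqrt ((a + b) ^ 2) := by
      rw [Real.sqrt_sq (by positivity)]
    rw [h]
    apply Real.sqrt_lt_sqrt (by positivity)
    nlinarith
end

section
/- A nonzero n-vector v ∈ Λ_n(ℝ^{n+N}) is simple with coefficient v^{\bar 0,0} = 1 on e_1∧⋯∧e_n if and only if v = M(ξ(v)), where ξ(v) ∈ ℝ^{N×n} is defined by [ξ(v)]_{j,i} = (−1)^{n−i} v^{\bar i, j}. -/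
/-- Concrete model of the exterior algebra coordinates over `ℝ^d`: a family of
coefficients indexed by subsets of `{1,…,d}` (a `k`-vector is supported on the
`k`-element subsets, i.e. increasing multi-indices). -/
abbrev LamF (d : ℕ) : Type := Finset (Fin d) → ℝ

/-- The wedge product `v_1 ∧ ⋯ ∧ v_k` in coordinates: its coefficient on an
increasing multi-index `s` with `k` elements is the corresponding `k × k` minor,
and it vanishes on all other multi-indices. -/
noncomputable def wedgeF {d k : ℕ} (v : Fin k → (Fin d → ℝ)) : LamF d :=
  fun s =>
    if h : s.card = k then
      Matrix.det (Matrix.of fun i j => v j ((s.orderIsoOfFin h i : Fin d)))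
    else 0

/-- The vector `e_i + ξ e_i ∈ ℝ^{n+N} = ℝ^n × ℝ^N`: first component the `i`-th
standard basis vector of `ℝ^n`, second component the `i`-th column of `ξ`. -/
noncomputable def graphVec {n N : ℕ} (ξ : Matrix (Fin N) (Fin n) ℝ) (i : Fin n) :
    Fin (n + N) → ℝ :=
  Fin.append (Pi.single i (1 : ℝ)) (fun j => ξ j i)

/-- The map `M(ξ) = (e_1 + ξe_1) ∧ ⋯ ∧ (e_n + ξe_n) ∈ Λ_n(ℝ^{n+N})`. -/
noncomputable def M {n N : ℕ} (ξ : Matrix (Fin N) (Fin n) ℝ) : LamF (n + N) :=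
  wedgeF (graphVec ξ)

/-- An `n`-vector (in coordinates) is *simple* if it is a wedge product of `n`
vectors of `ℝ^{n+N}`. -/
def IsSimpleF {d : ℕ} (k : ℕ) (v : LamF d) : Prop :=
  ∃ u : Fin k → (Fin d → ℝ), v = wedgeF u

/-- The increasing multi-index of `e_1 ∧ ⋯ ∧ e_n`. -/
def idx0 (n N : ℕ) : Finset (Fin (n + N)) :=
  Finset.univ.image (Fin.castAdd N)

/-- The increasing multi-index of `e_{\bar i} ∧ ε_j`. -/
def idxBar (n N : ℕ) (i : Fin n) (j : Fin N) : Finset (Fin (n + N)) :=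
  insert (Fin.natAdd n j) ((Finset.univ.erase i).image (Fin.castAdd N))

/-- The matrix `ξ(v) ∈ ℝ^{N×n}` extracted from the coefficients of an `n`-vector
`v` by `[ξ(v)]_{j,i} = (−1)^{n−i} v^{\bar i, j}` (with `i` zero-based). -/
noncomputable def xiOf (n N : ℕ) (v : LamF (n + N)) : Matrix (Fin N) (Fin n) ℝ :=
  fun j i => (-1 : ℝ) ^ (n - 1 - (i : ℕ)) * v (idxBar n N i j)

open Finset Matrix Equiv

/-- `wedgeF` on a set of the right cardinality, via `orderEmbOfFin`. -/
lemma wedgeF_apply {d k : ℕ} (u : Fin k → (Fin d → ℝ)) (s : Finset (Fin d))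
    (h : s.card = k) :
    wedgeF u s = Matrix.det (Matrix.of fun i j => u j (s.orderEmbOfFin h i)) := by
  rw [wedgeF, dif_pos h]
  rfl

lemma det_updateRow_one {k : ℕ} (i : Fin k) (u : Fin k → ℝ) :
    ((1 : Matrix (Fin k) (Fin k) ℝ).updateRow i u).det = u i := by
  rw [← Matrix.det_transpose, ← Matrix.updateCol_transpose, Matrix.transpose_one,
    ← Matrix.cramer_apply, Matrix.cramer_one]
  rfl

lemma card_idx0 (n N : ℕ) : (idx0 n N).card = n := by
  rw [idx0, Finset.card_image_of_injective _ (Fin.castAdd_injective _ _), Finset.card_univ,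
    Fintype.card_fin]

lemma orderEmbOfFin_idx0 (n N : ℕ) (i : Fin n) :
    (idx0 n N).orderEmbOfFin (card_idx0 n N) i = Fin.castAdd N i := by
  have := Finset.orderEmbOfFin_unique (f := fun i : Fin n => Fin.castAdd N i)
    (card_idx0 n N) (fun x => Finset.mem_image_of_mem _ (Finset.mem_univ x))
    (Fin.strictMono_castAdd N)
  exact (congrFun this i).symm

lemma M_idx0 {n N : ℕ} (ξ : Matrix (Fin N) (Fin n) ℝ) : M ξ (idx0 n N) = 1 := by
  rw [M, wedgeF_apply _ _ (card_idx0 n N)]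
  have : (Matrix.of fun i j => graphVec ξ j ((idx0 n N).orderEmbOfFin (card_idx0 n N) i))
      = (1 : Matrix (Fin n) (Fin n) ℝ) := by
    ext i j
    rw [Matrix.of_apply, orderEmbOfFin_idx0, graphVec, Fin.append_left,
      Matrix.one_apply, Pi.single_apply]
  rw [this, Matrix.det_one]

section idxBar

variable {m N : ℕ}

/-- The enumeration of `idxBar` in increasing order. -/
noncomputable def fBar (i : Fin (m + 1)) (j : Fin N) : Fin (m + 1) → Fin (m + 1 + N) :=
  Fin.snoc (fun r => Fin.castAdd N (i.succAbove r)) (Fin.natAdd (m + 1) j)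

lemma natAdd_not_mem_image (j : Fin N) (t : Finset (Fin (m + 1))) :
    Fin.natAdd (m + 1) j ∉ t.image (Fin.castAdd N) := by
  intro h
  obtain ⟨x, -, hx⟩ := Finset.mem_image.mp h
  have := congrArg Fin.val hx
  simp only [Fin.coe_castAdd, Fin.coe_natAdd] at this
  omega

lemma card_idxBar (i : Fin (m + 1)) (j : Fin N) : (idxBar (m + 1) N i j).card = m + 1 := by
  rw [idxBar, Finset.card_insert_of_notMem (natAdd_not_mem_image j _),
    Finset.card_image_of_injective _ (Fin.castAdd_injective _ _),
    Finset.card_erase_of_mem (Finset.mem_univ i), Finset.card_univ, Fintype.card_fin]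
  omega

lemma fBar_mem (i : Fin (m + 1)) (j : Fin N) (x : Fin (m + 1)) :
    fBar i j x ∈ idxBar (m + 1) N i j := by
  induction x using Fin.lastCases with
  | last => rw [fBar, Fin.snoc_last]; exact Finset.mem_insert_self _ _
  | cast r =>
    rw [fBar, Fin.snoc_castSucc]
    exact Finset.mem_insert_of_mem <| Finset.mem_image_of_mem _ <|
      Finset.mem_erase.mpr ⟨Fin.succAbove_ne i r, Finset.mem_univ _⟩

lemma fBar_strictMono (i : Fin (m + 1)) (j : Fin N) : StrictMono (fBar i j) := by
  intro a b hab
  induction b using Fin.lastCases with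
  | last =>
    obtain ⟨a', rfl⟩ := Fin.exists_castSucc_eq.mpr (Fin.lt_last_iff_ne_last.mp hab)
    rw [fBar, Fin.snoc_castSucc, Fin.snoc_last, Fin.lt_def]
    simp only [Fin.coe_castAdd, Fin.coe_natAdd]
    have := (i.succAbove a').is_lt
    omega
  | cast b' =>
    have hb : a < Fin.last m := lt_of_lt_of_le hab (Fin.le_last _)
    obtain ⟨a', rfl⟩ := Fin.exists_castSucc_eq.mpr hb.ne
    rw [fBar, Fin.snoc_castSucc, Fin.snoc_castSucc]
    exact Fin.strictMono_castAdd N <| Fin.strictMono_succAbove i <|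
      Fin.castSucc_lt_castSucc_iff.mp hab

lemma orderEmbOfFin_idxBar (i : Fin (m + 1)) (j : Fin N) (x : Fin (m + 1)) :
    (idxBar (m + 1) N i j).orderEmbOfFin (card_idxBar i j) x = fBar i j x := by
  have := Finset.orderEmbOfFin_unique (card_idxBar i j) (fBar_mem i j) (fBar_strictMono i j)
  exact (congrFun this x).symm

lemma M_idxBar (ξ : Matrix (Fin N) (Fin (m + 1)) ℝ) (i : Fin (m + 1)) (j : Fin N) :
    M ξ (idxBar (m + 1) N i j) = (-1 : ℝ) ^ ((i : ℕ) + m) * ξ j i := by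
  classical
  rw [M, wedgeF_apply _ _ (card_idxBar i j)]
  set B : Matrix (Fin (m + 1)) (Fin (m + 1)) ℝ :=
    Matrix.of fun r c =>
      graphVec ξ c ((idxBar (m + 1) N i j).orderEmbOfFin (card_idxBar i j) r) with hB
  set τ : Equiv.Perm (Fin (m + 1)) := (Fin.cycleRange i).trans (finRotate (m + 1))⁻¹ with hτ
  have hτi : τ i = Fin.last m := by
    rw [hτ]
    simp only [Equiv.trans_apply, Fin.cycleRange_self]
    rw [← finRotate_last]
    exact Equiv.symm_apply_apply _ _
  have hτs : ∀ r' : Fin m, τ (i.succAbove r') = Fin.castSucc r' := by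
    intro r'
    rw [hτ]
    simp only [Equiv.trans_apply, Fin.cycleRange_succAbove]
    have : finRotate (m + 1) (Fin.castSucc r') = r'.succ := by
      rw [finRotate_succ_apply, Fin.coeSucc_eq_succ]
    rw [← this]
    exact Equiv.symm_apply_apply _ _
  have hC : B.submatrix τ id = (1 : Matrix (Fin (m+1)) (Fin (m+1)) ℝ).updateRow i (fun c => ξ j c) := by
    ext r c
    rcases eq_or_ne r i with rfl | hr
    · rw [Matrix.updateRow_self, Matrix.submatrix_apply, id, hτi, hB, Matrix.of_apply,
        orderEmbOfFin_idxBar, fBar, Fin.snoc_last, graphVec, Fin.append_right]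
    · obtain ⟨r', rfl⟩ := Fin.exists_succAbove_eq hr
      rw [Matrix.updateRow_ne hr, Matrix.submatrix_apply, id, hτs, hB, Matrix.of_apply,
        orderEmbOfFin_idxBar, fBar, Fin.snoc_castSucc, graphVec, Fin.append_left,
        Matrix.one_apply, Pi.single_apply]
  have hsign : ((Equiv.Perm.sign τ : ℤ) : ℝ) = (-1 : ℝ) ^ ((i : ℕ) + m) := by
    have : Equiv.Perm.sign τ = (-1) ^ ((i : ℕ) + m) := by
      rw [hτ]
      have : (Fin.cycleRange i).trans (finRotate (m + 1))⁻¹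
          = (finRotate (m + 1))⁻¹ * Fin.cycleRange i := rfl
      rw [this, Equiv.Perm.sign_mul, Equiv.Perm.sign_inv, Fin.sign_cycleRange, sign_finRotate, pow_add]
      group
      rw [Nat.add_sub_cancel_left, add_comm]
    rw [this]
    push_cast
    rfl
  have hperm := Matrix.det_permute τ B
  rw [hC, det_updateRow_one] at hperm
  have h2 : ((-1 : ℝ) ^ ((i : ℕ) + m)) * ξ j i = ((-1 : ℝ) ^ ((i : ℕ) + m)) * (((Equiv.Perm.sign τ : ℤ) : ℝ) * B.det) := by
    rw [← hperm]
  rw [hsign, ← mul_assoc, ← pow_add, ← two_mul, pow_mul, neg_one_sq, one_pow, one_mul] at h2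
  rw [h2]

end idxBar

lemma xiOf_M {n N : ℕ} (ξ : Matrix (Fin N) (Fin n) ℝ) : xiOf n N (M ξ) = ξ := by
  funext j i
  cases n with
  | zero => exact i.elim0
  | succ m =>
    rw [xiOf, M_idxBar, ← mul_assoc, ← pow_add]
    have hi : (i : ℕ) ≤ m := Nat.lt_succ_iff.mp i.is_lt
    rw [show m + 1 - 1 - (i : ℕ) + ((i : ℕ) + m) = 2 * m by omega, pow_mul, neg_one_sq,
      one_pow, one_mul]

lemma wedgeF_linear {d k : ℕ} (u : Fin k → Fin d → ℝ) (A : Matrix (Fin k) (Fin k) ℝ)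
    (s : Finset (Fin d)) :
    wedgeF (fun c x => ∑ l, A l c * u l x) s = wedgeF u s * A.det := by
  unfold wedgeF
  split
  · rw [← Matrix.det_mul]
    congr 1
    ext r c
    simp only [Matrix.mul_apply, Matrix.of_apply]
    exact Finset.sum_congr rfl fun l _ => mul_comm _ _
  · rw [zero_mul]

lemma exists_eq_M {n N : ℕ} (u : Fin n → Fin (n + N) → ℝ)
    (h1 : wedgeF u (idx0 n N) = 1) :
    ∃ ξ : Matrix (Fin N) (Fin n) ℝ, wedgeF u = M ξ := by
  classical
  set A : Matrix (Fin n) (Fin n) ℝ := Matrix.of fun r c => u c (Fin.castAdd N r) with hAdef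
  have hA : A.det = 1 := by
    rw [wedgeF_apply _ _ (card_idx0 n N)] at h1
    rw [← h1]
    congr 1
    ext r c
    rw [hAdef, Matrix.of_apply, Matrix.of_apply, orderEmbOfFin_idx0]
  set u' : Fin n → Fin (n + N) → ℝ := fun c x => ∑ l, A⁻¹ l c * u l x with hu'
  have hw : ∀ s, wedgeF u' s = wedgeF u s := by
    intro s
    rw [hu', wedgeF_linear, Matrix.det_nonsing_inv, hA, Ring.inverse_one, mul_one]
  have hunit : IsUnit A.det := by rw [hA]; exact isUnit_one
  have htop : ∀ (c r : Fin n), u' c (Fin.castAdd N r) = (1 : Matrix (Fin n) (Fin n) ℝ) r c := by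
    intro c r
    rw [← Matrix.mul_nonsing_inv A hunit, Matrix.mul_apply, hu']
    exact Finset.sum_congr rfl fun l _ => mul_comm _ _
  refine ⟨fun j c => u' c (Fin.natAdd n j), ?_⟩
  have hgr : u' = graphVec (fun j c => u' c (Fin.natAdd n j)) := by
    funext c x
    refine Fin.addCases (fun r => ?_) (fun r => ?_) x
    · unfold graphVec; rw [Fin.append_left, htop, Matrix.one_apply, Pi.single_apply]
    · unfold graphVec; rw [Fin.append_right]
  unfold M; rw [← hgr]
  exact funext fun s => (hw s).symm


/-- A nonzero `n`-vector `v ∈ Λ_n(ℝ^{n+N})` is simple with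
coefficient `v^{\bar 0,0} = 1` on `e_1 ∧ ⋯ ∧ e_n` if and only if `v = M(ξ(v))`. -/
theorem simple_coeff_one_iff_eq_M_xiOf (n N : ℕ) (v : LamF (n + N))
    (hsupp : ∀ s : Finset (Fin (n + N)), s.card ≠ n → v s = 0)
    (hne : v ≠ 0) :
    (IsSimpleF n v ∧ v (idx0 n N) = 1) ↔ v = M (xiOf n N v) := by
  constructor
  · rintro ⟨⟨u, rfl⟩, h1⟩
    obtain ⟨ξ, hξ⟩ := exists_eq_M u h1
    rw [hξ, xiOf_M]
  · intro h
    refine ⟨⟨graphVec (xiOf n N v), h⟩, ?_⟩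
    rw [h]
    exact M_idx0 _
end
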